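/- Let α, β ≥ −1/2 and μ the measure on [−1,1] with density (1−t)^α(1+t)^β. For y = cos φ ∈ [−1,1] and 0 < δ ≤ π, let B(y,δ) := {x ∈ [−1,1] : |arccos x − arccos y| < δ}. Then μ(B(y,δ)) is comparable to δ(√(1−y²)+δ)^{2γ+1} with γ = α if y ≥ 0 and γ = β if y < 0, with constants depending only on α, β. -/

import Mathlib

open Real Set MeasureTheory

namespace Stmt17Aux

/-- The transformed integrand after the substitution `t = cos θ`. -/
noncomputable def G (α β θ : ℝ) : ℝ :=
  (2:ℝ) ^ (α + β + 1) * (sin (θ/2) ^ (2*α+1) * cos (θ/2) ^ (2*β+1))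

lemma contG (α β : ℝ) (hα : -(1/2:ℝ) ≤ α) (hβ : -(1/2:ℝ) ≤ β) : Continuous (G α β) := by
  have h1 : Continuous fun x : ℝ => x ^ (2*α+1) :=
    continuous_iff_continuousAt.2 fun x =>
      Real.continuousAt_rpow_const x _ (Or.inr (by linarith))
  have h2 : Continuous fun x : ℝ => x ^ (2*β+1) :=
    continuous_iff_continuousAt.2 fun x =>
      Real.continuousAt_rpow_const x _ (Or.inr (by linarith))
  exact continuous_const.mul
    (((h1.comp (Real.continuous_sin.comp (continuous_id.div_const 2))).mul
      (h2.comp (Real.continuous_cos.comp (continuous_id.div_const 2)))))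

lemma prod_eq {u v : ℝ} (hu : 0 < u) (hv : 0 < v) (a b : ℝ) :
    (2*u*v) * ((2*u^2) ^ a * (2*v^2) ^ b) = 2 ^ (a+b+1) * (u ^ (2*a+1) * v ^ (2*b+1)) := by
  have h2 : (0:ℝ) ≤ 2 := by norm_num
  have hu2 : (u^2 : ℝ) ^ a = u ^ (2*a) := by
    rw [← Real.rpow_natCast u 2, ← Real.rpow_mul hu.le]
    norm_num
  have hv2 : (v^2 : ℝ) ^ b = v ^ (2*b) := by
    rw [← Real.rpow_natCast v 2, ← Real.rpow_mul hv.le]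
    norm_num
  rw [Real.mul_rpow h2 (sq_nonneg u), Real.mul_rpow h2 (sq_nonneg v), hu2, hv2,
    Real.rpow_add_one hu.ne' (2*a), Real.rpow_add_one hv.ne' (2*b),
    Real.rpow_add two_pos, Real.rpow_add two_pos, Real.rpow_one]
  ring

lemma half_angle (α β : ℝ) {θ : ℝ} (h0 : 0 < θ) (hπ : θ < π) :
    |(-sin θ)| * ((1 - cos θ) ^ α * (1 + cos θ) ^ β) = G α β θ := by
  have hs : 0 < sin (θ/2) := sin_pos_of_pos_of_lt_pi (by linarith) (by linarith [pi_pos])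
  have hc : 0 < cos (θ/2) := cos_pos_of_mem_Ioo ⟨by linarith [pi_pos], by linarith⟩
  have hcθ : cos θ = 2 * cos (θ/2)^2 - 1 := by
    have := Real.cos_two_mul (θ/2)
    rw [show 2*(θ/2) = θ by ring] at this
    linarith
  have hpy := Real.sin_sq_add_cos_sq (θ/2)
  have h1 : 1 - cos θ = 2 * sin (θ/2)^2 := by nlinarith
  have h2 : 1 + cos θ = 2 * cos (θ/2)^2 := by linarith
  have h3 : sin θ = 2 * sin (θ/2) * cos (θ/2) := by
    have := Real.sin_two_mul (θ/2)
    rw [show 2*(θ/2) = θ by ring] at this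
    linarith
  have hsθ : 0 ≤ sin θ := by nlinarith
  rw [abs_neg, abs_of_nonneg hsθ, h1, h2, h3, G]
  exact prod_eq hs hc α β


lemma reduce (α β : ℝ) {φ δ : ℝ} (hφ0 : 0 ≤ φ) (hφπ : φ ≤ π) (hδ : 0 < δ) :
    (∫ t in {x : ℝ | x ∈ Icc (-1:ℝ) 1 ∧ |Real.arccos x - φ| < δ}, (1 - t) ^ α * (1 + t) ^ β)
      = ∫ θ in Ioo (max (φ - δ) 0) (min (φ + δ) π), G α β θ := by
  set a := max (φ - δ) 0 with ha_def
  set b := min (φ + δ) π with hb_def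
  have ha0 : 0 ≤ a := le_max_right _ _
  have hb0 : 0 ≤ b := le_min (by linarith) pi_pos.le
  have haπ : a ≤ π := max_le (by linarith) pi_pos.le
  have hbπ : b ≤ π := min_le_right _ _
  have hab : a ≤ b := by
    apply max_le (le_min (by linarith) (by linarith)) (le_min (by linarith) pi_pos.le)
  have hcab : cos b ≤ cos a := cos_le_cos_of_nonneg_of_le_pi ha0 hbπ hab
  set S := {x : ℝ | x ∈ Icc (-1:ℝ) 1 ∧ |Real.arccos x - φ| < δ} with hS_def
  -- inclusions
  have hSub1 : Ioo (cos b) (cos a) ⊆ S := by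
    intro x hx
    have hx1 : -1 ≤ x := le_trans (neg_one_le_cos b) hx.1.le
    have hx2 : x ≤ 1 := le_trans hx.2.le (cos_le_one a)
    have hax : a < arccos x := by
      by_contra h
      push_neg at h
      have := cos_le_cos_of_nonneg_of_le_pi (arccos_nonneg x) haπ h
      rw [Real.cos_arccos hx1 hx2] at this
      exact absurd hx.2 (not_lt.2 this)
    have hbx : arccos x < b := by
      by_contra h
      push_neg at h
      have := cos_le_cos_of_nonneg_of_le_pi hb0 (arccos_le_pi x) h
      rw [Real.cos_arccos hx1 hx2] at this
      exact absurd hx.1 (not_lt.2 this)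
    refine ⟨⟨hx1, hx2⟩, abs_lt.2 ⟨?_, ?_⟩⟩
    · have : φ - δ ≤ a := le_max_left _ _
      linarith
    · have : b ≤ φ + δ := min_le_left _ _
      linarith
  have hSub2 : S ⊆ Icc (cos b) (cos a) := by
    rintro x ⟨⟨hx1, hx2⟩, hx⟩
    rw [abs_lt] at hx
    have h1 : arccos x ≤ b := le_min (by linarith) (arccos_le_pi x)
    have h2 : a ≤ arccos x := max_le (by linarith) (arccos_nonneg x)
    constructor
    · have := cos_le_cos_of_nonneg_of_le_pi (arccos_nonneg x) hbπ h1
      rwa [Real.cos_arccos hx1 hx2] at this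
    · have := cos_le_cos_of_nonneg_of_le_pi ha0 (arccos_le_pi x) h2
      rwa [Real.cos_arccos hx1 hx2] at this
  -- S =ᵐ Ioo (cos b) (cos a)
  have hae : S =ᵐ[volume] Ioo (cos b) (cos a) := by
    rw [MeasureTheory.ae_eq_set]
    constructor
    · refine measure_mono_null (show S \ Ioo (cos b) (cos a) ⊆ ({cos b, cos a} : Set ℝ) from ?_) ?_
      · intro x hx
        have hxI : x ∈ Icc (cos b) (cos a) := hSub2 hx.1
        rcases eq_or_lt_of_le hxI.1 with h | h
        · exact Or.inl h.symm
        rcases eq_or_lt_of_le hxI.2 with h' | h'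
        · exact Or.inr h'
        · exact absurd ⟨h, h'⟩ hx.2
      · exact measure_union_null (measure_singleton _) (measure_singleton _)
    · rw [diff_eq_empty.2 hSub1]
      exact measure_empty
  rw [setIntegral_congr_set hae]
  -- change of variables
  have himg : cos '' Ioo a b = Ioo (cos b) (cos a) := by
    apply Subset.antisymm
    · rintro _ ⟨θ, hθ, rfl⟩
      exact ⟨cos_lt_cos_of_nonneg_of_le_pi (by linarith [hθ.1]) hbπ hθ.2,
        cos_lt_cos_of_nonneg_of_le_pi ha0 (by linarith [hθ.2]) hθ.1⟩
    · intro x hx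
      have hx1 : -1 ≤ x := le_trans (neg_one_le_cos b) hx.1.le
      have hx2 : x ≤ 1 := le_trans hx.2.le (cos_le_one a)
      refine ⟨arccos x, ⟨?_, ?_⟩, Real.cos_arccos hx1 hx2⟩
      · by_contra h
        push_neg at h
        have := cos_le_cos_of_nonneg_of_le_pi (arccos_nonneg x) haπ h
        rw [Real.cos_arccos hx1 hx2] at this
        exact absurd hx.2 (not_lt.2 this)
      · by_contra h
        push_neg at h
        have := cos_le_cos_of_nonneg_of_le_pi hb0 (arccos_le_pi x) h
        rw [Real.cos_arccos hx1 hx2] at this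
        exact absurd hx.1 (not_lt.2 this)
  rw [← himg]
  rw [integral_image_eq_integral_abs_deriv_smul measurableSet_Ioo
    (fun x _ => (Real.hasDerivAt_cos x).hasDerivWithinAt) (Real.injOn_cos.mono
      (fun θ (hθ : θ ∈ Ioo a b) => mem_Icc.2 ⟨le_trans ha0 hθ.1.le, le_trans hθ.2.le hbπ⟩)) _]
  apply setIntegral_congr_fun measurableSet_Ioo
  intro θ hθ
  have h0 : 0 < θ := lt_of_le_of_lt ha0 hθ.1
  have hπ' : θ < π := lt_of_lt_of_le hθ.2 hbπ
  simp only [smul_eq_mul]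
  exact half_angle α β h0 hπ'


noncomputable def C₁ (α β : ℝ) : ℝ :=
  (2:ℝ) ^ (α+β+1) * cos (3*π/8) ^ (2*β+1) / (8 * (8*π) ^ (2*α+1))

noncomputable def C₂ (α β : ℝ) : ℝ := 2 * (2:ℝ) ^ (α+β+1) * (π/4) ^ (2*α+1)

lemma cos38_pos : 0 < cos (3*π/8) :=
  cos_pos_of_mem_Ioo ⟨by linarith [pi_pos], by linarith [pi_pos]⟩

lemma C₁_pos (α β : ℝ) : 0 < C₁ α β := by
  have h8π : (0:ℝ) < 8*π := by linarith [pi_pos]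
  exact div_pos (mul_pos (Real.rpow_pos_of_pos two_pos _)
    (Real.rpow_pos_of_pos cos38_pos _))
    (mul_pos (by norm_num) (Real.rpow_pos_of_pos h8π _))

lemma C₂_pos (α β : ℝ) : 0 < C₂ α β := by
  have : (0:ℝ) < π/4 := by linarith [pi_pos]
  exact mul_pos (mul_pos two_pos (Real.rpow_pos_of_pos two_pos _))
    (Real.rpow_pos_of_pos this _)

set_option maxHeartbeats 1000000 in
lemma estimate (α β : ℝ) (hα : -(1/2:ℝ) ≤ α) (hβ : -(1/2:ℝ) ≤ β) {φ δ : ℝ}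
    (hφ0 : 0 ≤ φ) (hφ : φ ≤ π/2) (hδ0 : 0 < δ) (hδπ : δ ≤ π) :
    C₁ α β * (δ * (sin φ + δ) ^ (2*α+1))
        ≤ (∫ θ in Ioo (max (φ - δ) 0) (min (φ + δ) π), G α β θ)
      ∧ (∫ θ in Ioo (max (φ - δ) 0) (min (φ + δ) π), G α β θ)
        ≤ C₂ α β * (δ * (sin φ + δ) ^ (2*α+1)) := by
  have hπ := pi_pos
  set a := max (φ - δ) 0 with ha_def
  set b := min (φ + δ) π with hb_def
  have ha0 : 0 ≤ a := le_max_right _ _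
  have hbπ : b ≤ π := min_le_right _ _
  have hab : a ≤ b :=
    max_le (le_min (by linarith) (by linarith)) (le_min (by linarith) hπ.le)
  have hp : 0 ≤ 2*α+1 := by linarith
  have hq : 0 ≤ 2*β+1 := by linarith
  have hK : (0:ℝ) < (2:ℝ) ^ (α+β+1) := Real.rpow_pos_of_pos two_pos _
  have hsφ : 0 ≤ sin φ := sin_nonneg_of_nonneg_of_le_pi hφ0 (by linarith)
  have hsδ : 0 < sin φ + δ := by linarith
  -- pointwise facts on Ioo a b
  have hGnn : ∀ θ ∈ Ioo a b, 0 ≤ G α β θ := by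
    intro θ hθ
    have h1 : 0 ≤ sin (θ/2) :=
      sin_nonneg_of_nonneg_of_le_pi (by linarith [le_trans ha0 hθ.1.le])
        (by linarith [lt_of_lt_of_le hθ.2 hbπ])
    have h2 : 0 ≤ cos (θ/2) :=
      cos_nonneg_of_mem_Icc ⟨by linarith [le_trans ha0 hθ.1.le],
        by linarith [lt_of_lt_of_le hθ.2 hbπ]⟩
    exact mul_nonneg hK.le (mul_nonneg (Real.rpow_nonneg h1 _) (Real.rpow_nonneg h2 _))
  -- UPPER BOUND
  have hupper : (∫ θ in Ioo a b, G α β θ) ≤ C₂ α β * (δ * (sin φ + δ) ^ (2*α+1)) := by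
    set M : ℝ := (2:ℝ) ^ (α+β+1) * ((π/4 * (sin φ + δ)) ^ (2*α+1)) with hM_def
    have hbase : (0:ℝ) ≤ π/4 * (sin φ + δ) := by positivity
    have hM0 : 0 ≤ M := mul_nonneg hK.le (Real.rpow_nonneg hbase _)
    have hbound : ∀ θ ∈ Ioo a b, ‖G α β θ‖ ≤ M := by
      intro θ hθ
      have h0θ : 0 ≤ θ := le_trans ha0 hθ.1.le
      have hθπ : θ ≤ π := le_of_lt (lt_of_lt_of_le hθ.2 hbπ)
      have h1 : 0 ≤ sin (θ/2) := sin_nonneg_of_nonneg_of_le_pi (by linarith) (by linarith)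
      have h2 : 0 ≤ cos (θ/2) := cos_nonneg_of_mem_Icc ⟨by linarith, by linarith⟩
      have h2' : cos (θ/2) ≤ 1 := cos_le_one _
      rw [norm_of_nonneg (hGnn θ hθ), G]
      have hsin : sin (θ/2) ≤ π/4 * (sin φ + δ) := by
        have l1 : sin (θ/2) ≤ θ/2 := Real.sin_le (by linarith)
        have l2 : θ < b := hθ.2
        have l3 : b ≤ φ + δ := min_le_left _ _
        have l4 : 2*φ ≤ sin φ * π := by
          have h := Real.mul_le_sin hφ0 hφ
          rw [div_mul_eq_mul_div, div_le_iff₀ hπ] at h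
          linarith
        have hπ2 : (2:ℝ) ≤ π := by linarith [pi_gt_three]
        nlinarith [mul_nonneg (by linarith : (0:ℝ) ≤ π - 2) hδ0.le]
      have e1 : sin (θ/2) ^ (2*α+1) ≤ (π/4 * (sin φ + δ)) ^ (2*α+1) :=
        Real.rpow_le_rpow h1 hsin hp
      have e2 : cos (θ/2) ^ (2*β+1) ≤ 1 := Real.rpow_le_one h2 h2' hq
      calc (2:ℝ) ^ (α+β+1) * (sin (θ/2) ^ (2*α+1) * cos (θ/2) ^ (2*β+1))
          ≤ (2:ℝ) ^ (α+β+1) * ((π/4 * (sin φ + δ)) ^ (2*α+1) * 1) := by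
            apply mul_le_mul_of_nonneg_left _ hK.le
            exact mul_le_mul e1 e2 (Real.rpow_nonneg h2 _) (Real.rpow_nonneg hbase _)
        _ = M := by rw [hM_def]; ring
    have hvol : volume (Ioo a b) < ⊤ := by
      rw [Real.volume_Ioo]; exact ENNReal.ofReal_lt_top
    have := norm_setIntegral_le_of_norm_le_const hvol hbound
    have hInorm : (∫ θ in Ioo a b, G α β θ) ≤ M * (volume (Ioo a b)).toReal :=
      le_trans (le_abs_self _) this
    have hvol' : (volume (Ioo a b)).toReal ≤ 2*δ := by
      rw [Real.volume_Ioo, ENNReal.toReal_ofReal (by linarith)]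
      have l3 : b ≤ φ + δ := min_le_left _ _
      have l4 : φ - δ ≤ a := le_max_left _ _
      linarith
    calc (∫ θ in Ioo a b, G α β θ) ≤ M * (volume (Ioo a b)).toReal := hInorm
      _ ≤ M * (2*δ) := mul_le_mul_of_nonneg_left hvol' hM0
      _ = C₂ α β * (δ * (sin φ + δ) ^ (2*α+1)) := by
          rw [hM_def, C₂, Real.mul_rpow (by positivity) hsδ.le]
          ring
  -- LOWER BOUND
  have hlower : C₁ α β * (δ * (sin φ + δ) ^ (2*α+1)) ≤ ∫ θ in Ioo a b, G α β θ := by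
    set η := min δ (π/4) with hη_def
    have hη0 : 0 < η := lt_min hδ0 (by positivity)
    have hηδ : η ≤ δ := min_le_left _ _
    have hη4 : η ≤ π/4 := min_le_right _ _
    have hδ4η : δ ≤ 4*η := by
      rcases le_total δ (π/4) with h | h
      · rw [hη_def, min_eq_left h]; linarith
      · rw [hη_def, min_eq_right h]; linarith
    set m : ℝ := (2:ℝ) ^ (α+β+1) * (((sin φ + δ)/(8*π)) ^ (2*α+1) * cos (3*π/8) ^ (2*β+1))
      with hm_def
    have hbase : (0:ℝ) ≤ (sin φ + δ)/(8*π) := div_nonneg hsδ.le (by positivity)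
    have hm0 : 0 ≤ m :=
      mul_nonneg hK.le (mul_nonneg (Real.rpow_nonneg hbase _)
        (Real.rpow_nonneg cos38_pos.le _))
    have hsub : Ioo (φ + η/2) (φ + η) ⊆ Ioo a b := by
      apply Ioo_subset_Ioo
      · exact max_le (by linarith) (by linarith)
      · exact le_min (by linarith) (by linarith)
    have hint : IntegrableOn (G α β) (Ioo a b) volume :=
      ((contG α β hα hβ).integrableOn_Icc).mono_set Ioo_subset_Icc_self
    have hpt : ∀ θ ∈ Ioo (φ + η/2) (φ + η), m ≤ G α β θ := by
      intro θ hθ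
      have hθl : φ + η/2 < θ := hθ.1
      have hθu : θ < φ + η := hθ.2
      have h0θ : 0 < θ := by linarith
      have hθ34 : θ ≤ 3*π/4 := by linarith
      have hcos : cos (3*π/8) ≤ cos (θ/2) :=
        cos_le_cos_of_nonneg_of_le_pi (by linarith) (by linarith) (by linarith)
      have hsin : (sin φ + δ)/(8*π) ≤ sin (θ/2) := by
        have l1 : 2/π * (θ/2) ≤ sin (θ/2) := Real.mul_le_sin (by linarith) (by linarith)
        have l2 : sin φ ≤ φ := Real.sin_le hφ0
        have l3 : sin φ + δ ≤ 8*θ := by linarith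
        rw [div_le_iff₀ (by linarith)]
        rw [div_mul_eq_mul_div, div_le_iff₀ hπ] at l1
        nlinarith
      have e1 : ((sin φ + δ)/(8*π)) ^ (2*α+1) ≤ sin (θ/2) ^ (2*α+1) :=
        Real.rpow_le_rpow hbase hsin hp
      have e2 : cos (3*π/8) ^ (2*β+1) ≤ cos (θ/2) ^ (2*β+1) :=
        Real.rpow_le_rpow cos38_pos.le hcos hq
      rw [hm_def, G]
      apply mul_le_mul_of_nonneg_left _ hK.le
      exact mul_le_mul e1 e2 (Real.rpow_nonneg cos38_pos.le _)
        (Real.rpow_nonneg (sin_nonneg_of_nonneg_of_le_pi (by linarith) (by linarith)) _)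
    have step1 : m * (η/2) ≤ ∫ θ in Ioo (φ + η/2) (φ + η), G α β θ := by
      have hvol : (volume (Ioo (φ + η/2) (φ + η))).toReal = η/2 := by
        rw [Real.volume_Ioo, ENNReal.toReal_ofReal (by linarith)]
        ring
      have := setIntegral_ge_of_const_le_real measurableSet_Ioo
        (by rw [Real.volume_Ioo]; exact ENNReal.ofReal_ne_top) hpt
        (hint.mono_set hsub)
      rwa [measureReal_def, hvol] at this
    have step2 : (∫ θ in Ioo (φ + η/2) (φ + η), G α β θ) ≤ ∫ θ in Ioo a b, G α β θ := by
      apply setIntegral_mono_set hint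
      · exact (ae_restrict_iff' measurableSet_Ioo).2 (ae_of_all _ hGnn)
      · exact HasSubset.Subset.eventuallyLE hsub
    have key : C₁ α β * (δ * (sin φ + δ) ^ (2*α+1)) ≤ m * (η/2) := by
      have hrw : m * (δ/8) = C₁ α β * (δ * (sin φ + δ) ^ (2*α+1)) := by
        rw [hm_def, C₁, Real.div_rpow hsδ.le (by positivity)]
        ring
      have h2 : m * (δ/8) ≤ m * (η/2) := mul_le_mul_of_nonneg_left (by linarith) hm0
      exact le_trans (le_of_eq hrw.symm) h2
    exact le_trans key (le_trans step1 step2)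
  exact ⟨hlower, hupper⟩


lemma reflect (α β : ℝ) {φ δ : ℝ} (hφ0 : 0 ≤ φ) (hφπ : φ ≤ π) (hδ0 : 0 < δ) :
    (∫ θ in Ioo (max (φ - δ) 0) (min (φ + δ) π), G α β θ)
      = ∫ θ in Ioo (max ((π - φ) - δ) 0) (min ((π - φ) + δ) π), G β α θ := by
  have hπ := pi_pos
  have hab : max (φ - δ) 0 ≤ min (φ + δ) π :=
    max_le (le_min (by linarith) (by linarith)) (le_min (by linarith) hπ.le)
  have hab' : max ((π - φ) - δ) 0 ≤ min ((π - φ) + δ) π :=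
    max_le (le_min (by linarith) (by linarith)) (le_min (by linarith) hπ.le)
  have key : ∀ θ : ℝ, G α β θ = G β α (π - θ) := by
    intro θ
    rw [G, G, show (π - θ)/2 = π/2 - θ/2 by ring, Real.sin_pi_div_two_sub,
      Real.cos_pi_div_two_sub]
    ring
  have e1 : π - min (φ + δ) π = max ((π - φ) - δ) 0 := by
    rcases le_total (φ + δ) π with h | h
    · rw [min_eq_left h, max_eq_left (by linarith)]
      ring
    · rw [min_eq_right h, max_eq_right (by linarith)]
      ring
  have e2 : π - max (φ - δ) 0 = min ((π - φ) + δ) π := by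
    rcases le_total (φ - δ) 0 with h | h
    · rw [max_eq_right h, min_eq_right (by linarith)]
      ring
    · rw [max_eq_left h, min_eq_left (by linarith)]
      ring
  rw [← integral_Ioc_eq_integral_Ioo, ← intervalIntegral.integral_of_le hab]
  simp_rw [key]
  rw [intervalIntegral.integral_comp_sub_left (G β α) π, e1, e2,
    intervalIntegral.integral_of_le hab', integral_Ioc_eq_integral_Ioo]


end Stmt17Aux

open Stmt17Aux in
/-- For the Jacobi measure `dμ = (1-t)^α(1+t)^β dt` on `[-1,1]` with `α, β ≥ -1/2`,
the measure of the arc-ball `B(y,δ) = {x ∈ [-1,1] : |arccos x - arccos y| < δ}` is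
comparable to `δ(√(1-y²)+δ)^{2γ+1}` where `γ = α` if `y ≥ 0` and `γ = β` if `y < 0`. -/
theorem stmt17 (α β : ℝ) (hα : -(1/2 : ℝ) ≤ α) (hβ : -(1/2 : ℝ) ≤ β) :
    ∃ c₁ : ℝ, 0 < c₁ ∧ ∃ c₂ : ℝ, 0 < c₂ ∧
      ∀ y ∈ Icc (-1 : ℝ) 1, ∀ δ : ℝ, 0 < δ → δ ≤ π →
        c₁ * (δ * (Real.sqrt (1 - y ^ 2) + δ) ^
            (2 * (if 0 ≤ y then α else β) + 1)) ≤
          (∫ t in {x : ℝ | x ∈ Icc (-1 : ℝ) 1 ∧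
              |Real.arccos x - Real.arccos y| < δ}, (1 - t) ^ α * (1 + t) ^ β) ∧
        (∫ t in {x : ℝ | x ∈ Icc (-1 : ℝ) 1 ∧
              |Real.arccos x - Real.arccos y| < δ}, (1 - t) ^ α * (1 + t) ^ β) ≤
          c₂ * (δ * (Real.sqrt (1 - y ^ 2) + δ) ^
            (2 * (if 0 ≤ y then α else β) + 1)) := by
  refine ⟨min (C₁ α β) (C₁ β α), lt_min (C₁_pos α β) (C₁_pos β α),
    max (C₂ α β) (C₂ β α), lt_of_lt_of_le (C₂_pos α β) (le_max_left _ _), ?_⟩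
  intro y hy δ hδ0 hδπ
  have hφ0 : 0 ≤ arccos y := Real.arccos_nonneg y
  have hφπ : arccos y ≤ π := Real.arccos_le_pi y
  have hsnn : 0 ≤ sin (arccos y) := sin_nonneg_of_nonneg_of_le_pi hφ0 hφπ
  have hsin : Real.sqrt (1 - y ^ 2) = sin (arccos y) := (Real.sin_arccos y).symm
  rw [reduce α β hφ0 hφπ hδ0, hsin]
  by_cases hy0 : 0 ≤ y
  · rw [if_pos hy0]
    have hφ2 : arccos y ≤ π/2 := Real.arccos_le_pi_div_two.2 hy0
    obtain ⟨h1, h2⟩ := estimate α β hα hβ hφ0 hφ2 hδ0 hδπ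
    have hnn : 0 ≤ δ * (sin (arccos y) + δ) ^ (2*α+1) :=
      mul_nonneg hδ0.le (Real.rpow_nonneg (by linarith) _)
    exact ⟨le_trans (mul_le_mul_of_nonneg_right (min_le_left _ _) hnn) h1,
      le_trans h2 (mul_le_mul_of_nonneg_right (le_max_left _ _) hnn)⟩
  · rw [if_neg hy0]
    push_neg at hy0
    have hφ2 : π/2 ≤ arccos y := by
      by_contra h
      push_neg at h
      exact absurd (Real.arccos_le_pi_div_two.1 h.le) (not_le.2 hy0)
    rw [reflect α β hφ0 hφπ hδ0]
    have hψ0 : 0 ≤ π - arccos y := by linarith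
    have hψ2 : π - arccos y ≤ π/2 := by linarith
    obtain ⟨h1, h2⟩ := estimate β α hβ hα hψ0 hψ2 hδ0 hδπ
    rw [show sin (arccos y) = sin (π - arccos y) from (Real.sin_pi_sub _).symm]
    have hnn : 0 ≤ δ * (sin (π - arccos y) + δ) ^ (2*β+1) :=
      mul_nonneg hδ0.le (Real.rpow_nonneg (by rw [Real.sin_pi_sub]; linarith) _)
    exact ⟨le_trans (mul_le_mul_of_nonneg_right (min_le_right _ _) hnn) h1,
      le_trans h2 (mul_le_mul_of_nonneg_right (le_max_right _ _) hnn)⟩
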